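/- arXiv:2510.04745 — 4 statements merged into one kernel-verified Lean document; each statement's English description precedes it below -/
import Mathlib

section
/- Let s_1,…,s_L be independent random vectors in ℝ^L whose entries are i.i.d. according to continuous (atomless) distributions, and let α_1,…,α_L ∈ ℕ^L be pairwise distinct exponent vectors. Define the L×L matrix M by M(i,j) = ∏_{k=1}^{L} (s_k(i))^{α_j(k)}. Then M has full rank almost surely. -/
open MeasureTheory ProbabilityTheory MvPolynomial

set_option linter.unusedVariables false

lemma measurable_mvpoly_eval'' {ι : Type*}
    (p : MvPolynomial ι ℝ) : Measurable fun x : ι → ℝ => MvPolynomial.eval x p := by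
  induction p using MvPolynomial.induction_on with
  | C a => simp
  | add p q hp hq => simp only [map_add]; fun_prop
  | mul_X p i hp => simp only [map_mul, MvPolynomial.eval_X]; fun_prop


lemma aux_fin : ∀ (n : ℕ) (ν : Fin n → Measure ℝ),
    (∀ i, IsProbabilityMeasure (ν i)) → (∀ i, NoAtoms (ν i)) →
    ∀ (p : MvPolynomial (Fin n) ℝ), p ≠ 0 →
    Measure.pi ν {x | MvPolynomial.eval x p = 0} = 0 := by
  intro n
  induction n with
  | zero =>
    intro ν _ _ p hp
    obtain ⟨a, rfl⟩ := MvPolynomial.C_surjective (Fin 0) p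
    have ha : a ≠ 0 := fun h => hp (by simp [h])
    have h0 : {x : Fin 0 → ℝ | MvPolynomial.eval x (C a) = 0} = ∅ := by
      ext x; simp [ha]
    rw [h0]; exact measure_empty
  | succ n ih =>
    intro ν hprob hatom p hp
    haveI := hprob; haveI := hatom
    set q : Polynomial (MvPolynomial (Fin n) ℝ) := MvPolynomial.finSuccEquiv ℝ n p with hqdef
    have hq : q ≠ 0 := by
      intro h
      apply hp
      have h2 := congrArg (MvPolynomial.finSuccEquiv ℝ n).symm h
      rwa [hqdef, AlgEquiv.symm_apply_apply, map_zero] at h2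
    have hc : q.coeff q.natDegree ≠ 0 := by
      have h3 := Polynomial.leadingCoeff_ne_zero.mpr hq
      rwa [Polynomial.leadingCoeff] at h3
    -- measure preserving decomposition
    have hmp := measurePreserving_piFinSuccAbove ν 0
    set e := MeasurableEquiv.piFinSuccAbove (fun _ : Fin (n+1) => ℝ) 0 with hedef
    set S : Set (Fin (n+1) → ℝ) := {x | MvPolynomial.eval x p = 0} with hSdef
    have hSm : MeasurableSet S := (measurable_mvpoly_eval'' p) (measurableSet_singleton 0)
    have hTm : MeasurableSet (e.symm ⁻¹' S) := e.symm.measurable hSm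
    have key : Measure.pi ν S = ((ν 0).prod (Measure.pi fun j => ν ((0:Fin (n+1)).succAbove j))) (e.symm ⁻¹' S) := by
      rw [← hmp.map_eq, MeasurableEquiv.map_apply]
      congr 1
      ext x
      simp
    rw [key, Measure.prod_apply_symm hTm]
    -- inner sets
    have hIH := ih (fun j => ν ((0:Fin (n+1)).succAbove j)) (fun j => hprob _) (fun j => hatom _)
      (q.coeff q.natDegree) hc
    have hae : ∀ᵐ y ∂(Measure.pi fun j => ν ((0:Fin (n+1)).succAbove j)),
        MvPolynomial.eval y (q.coeff q.natDegree) ≠ 0 := by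
      rw [ae_iff]
      simpa using hIH
    have hzero : ∀ᵐ y ∂(Measure.pi fun j => ν ((0:Fin (n+1)).succAbove j)),
        (ν 0) ((fun x => (x, y)) ⁻¹' (e.symm ⁻¹' S)) = 0 := by
      filter_upwards [hae] with y hy
      have hQ : Polynomial.map (MvPolynomial.eval y) q ≠ 0 := by
        intro h
        apply hy
        have := congrArg (fun r => r.coeff q.natDegree) h
        simpa [Polynomial.coeff_map] using this
      have hset : (fun x => (x, y)) ⁻¹' (e.symm ⁻¹' S) =
          {a | Polynomial.eval a (Polynomial.map (MvPolynomial.eval y) q) = 0} := by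
        ext a
        simp only [Set.mem_preimage, hSdef, Set.mem_setOf_eq, hedef,
          MeasurableEquiv.piFinSuccAbove_symm_apply, Fin.insertNthEquiv_zero]
        change MvPolynomial.eval (Fin.cons a y) p = 0 ↔ _
        rw [MvPolynomial.eval_eq_eval_mv_eval']
      rw [hset]
      haveI : NullSingletonClass (ν 0) := hatom 0
      exact Set.Countable.measure_zero
        ((Polynomial.finite_setOf_isRoot hQ).countable) _
    calc ∫⁻ y, (ν 0) ((fun x => (x, y)) ⁻¹' (e.symm ⁻¹' S)) ∂_ = ∫⁻ _, 0 ∂_ :=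
          lintegral_congr_ae hzero
      _ = 0 := lintegral_zero


lemma aux_fintype {ι : Type*} [Fintype ι] (ν : ι → Measure ℝ)
    (hprob : ∀ i, IsProbabilityMeasure (ν i)) (hatom : ∀ i, NoAtoms (ν i))
    (p : MvPolynomial ι ℝ) (hp : p ≠ 0) :
    Measure.pi ν {x | MvPolynomial.eval x p = 0} = 0 := by
  haveI := hprob
  classical
  set e : Fin (Fintype.card ι) ≃ ι := (Fintype.equivFin ι).symm with hedef
  have hmp := measurePreserving_piCongrLeft ν e
  set S : Set (ι → ℝ) := {x | MvPolynomial.eval x p = 0} with hSdef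
  have hSm : MeasurableSet S := (measurable_mvpoly_eval'' p) (measurableSet_singleton 0)
  set E := MeasurableEquiv.piCongrLeft (fun _ : ι => ℝ) e with hEdef
  have key : Measure.pi ν S = Measure.pi (fun i' => ν (e i')) (E ⁻¹' S) := by
    rw [← hmp.map_eq, MeasurableEquiv.map_apply]
  rw [key]
  have hp' : MvPolynomial.rename e.symm p ≠ 0 := fun h =>
    hp (MvPolynomial.rename_injective _ e.symm.injective (by simpa using h))
  have hset : E ⁻¹' S = {x | MvPolynomial.eval x (MvPolynomial.rename e.symm p) = 0} := by
    ext x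
    simp only [Set.mem_preimage, hSdef, Set.mem_setOf_eq, MvPolynomial.eval_rename]
    have hfun : (E x : ι → ℝ) = x ∘ e.symm := by
      funext i
      rw [hEdef, MeasurableEquiv.coe_piCongrLeft]
      conv_lhs => rw [show i = e (e.symm i) by simp]
      rw [Equiv.piCongrLeft_apply_apply]
      rfl
    rw [hfun]
  rw [hset]
  exact aux_fin _ _ (fun i => hprob _) (fun i => hatom _) _ hp'

lemma prod_monomial_one {ι σ : Type*} (s : Finset ι) (f : ι → (σ →₀ ℕ)) :
    ∏ i ∈ s, MvPolynomial.monomial (f i) (1:ℝ) = MvPolynomial.monomial (∑ i ∈ s, f i) 1 := by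
  classical
  induction s using Finset.cons_induction with
  | empty => simp
  | cons a s ha ih => rw [Finset.prod_cons, Finset.sum_cons, ih, MvPolynomial.monomial_mul, one_mul]

lemma det_poly_ne_zero (L : ℕ) (α : Fin L → Fin L → ℕ) (hα : Function.Injective α) :
    (Matrix.of fun i j : Fin L =>
      ∏ k, (MvPolynomial.X (k, i) : MvPolynomial (Fin L × Fin L) ℝ) ^ α j k).det ≠ 0 := by
  classical
  set D : Equiv.Perm (Fin L) → ((Fin L × Fin L) →₀ ℕ) :=
    fun σ => ∑ i, ∑ k, Finsupp.single (k, σ i) (α i k) with hD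
  have hterm : ∀ σ : Equiv.Perm (Fin L),
      (∏ i, ∏ k, (MvPolynomial.X (k, σ i) : MvPolynomial (Fin L × Fin L) ℝ) ^ α i k)
        = MvPolynomial.monomial (D σ) 1 := by
    intro σ
    rw [hD]
    have : ∀ i, (∏ k, (MvPolynomial.X (k, σ i) : MvPolynomial (Fin L × Fin L) ℝ) ^ α i k)
        = MvPolynomial.monomial (∑ k, Finsupp.single (k, σ i) (α i k)) 1 := by
      intro i
      rw [← prod_monomial_one]
      simp [MvPolynomial.X_pow_eq_monomial]
    simp_rw [this]
    rw [prod_monomial_one]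
  have hDapp : ∀ σ (k₀ j₀ : Fin L), D σ (k₀, j₀) = α (σ.symm j₀) k₀ := by
    intro σ k₀ j₀
    rw [hD]
    simp only [Finsupp.finset_sum_apply, Finsupp.single_apply]
    rw [Finset.sum_eq_single (σ.symm j₀)]
    · rw [Finset.sum_eq_single k₀]
      · simp
      · intro k _ hk
        simp [Prod.ext_iff, hk]
      · simp
    · intro i _ hi
      have : σ i ≠ j₀ := fun h => hi (by simp [← h])
      apply Finset.sum_eq_zero
      intro k _
      simp [Prod.ext_iff, this]
    · simp
  have hDinj : ∀ σ, D σ = D 1 → σ = 1 := by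
    intro σ hσ
    have : ∀ j₀, σ.symm j₀ = j₀ := by
      intro j₀
      apply hα
      funext k₀
      have h2 := DFunLike.congr_fun hσ (k₀, j₀)
      rw [hDapp, hDapp] at h2
      exact h2
    ext j
    have h2 := this (σ j)
    rw [Equiv.symm_apply_apply] at h2
    rw [Equiv.Perm.one_apply]
    exact congrArg Fin.val h2.symm
  intro h
  have hco := congrArg (MvPolynomial.coeff (D 1)) h
  rw [Matrix.det_apply, MvPolynomial.coeff_zero] at hco
  rw [MvPolynomial.coeff_sum] at hco
  simp only [Matrix.of_apply] at hco
  simp_rw [hterm, MvPolynomial.coeff_smul] at hco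
  rw [Finset.sum_eq_single (1 : Equiv.Perm (Fin L))] at hco
  · simp at hco
  · intro σ _ hσ
    have : D σ ≠ D 1 := fun h' => hσ (hDinj σ h')
    simp [MvPolynomial.coeff_monomial, this]
  · simp

/-- Full-rank lemma: the random monomial matrix `M(i,j) = ∏ₖ (sₖ(i))^(αⱼ(k))`
built from jointly independent entries with atomless laws and pairwise
distinct exponent vectors is full rank (nonzero determinant) almost surely. -/
theorem full_rank_monomial_matrix
    {Ω : Type*} [MeasurableSpace Ω] (μ : Measure Ω) [IsProbabilityMeasure μ]
    (L : ℕ) (s : Fin L → Fin L → Ω → ℝ)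
    (hmeas : ∀ k i, Measurable (s k i))
    (hindep : iIndepFun
      (fun p : Fin L × Fin L => s p.1 p.2) μ)
    (hiid : ∀ k i i', μ.map (s k i) = μ.map (s k i'))
    (hatomless : ∀ k i, NoAtoms (μ.map (s k i)))
    (α : Fin L → Fin L → ℕ) (hα : Function.Injective α) :
    ∀ᵐ ω ∂μ,
      (Matrix.of fun i j : Fin L => ∏ k, (s k i ω) ^ (α j k)).det ≠ 0 := by
  classical
  set ν : Fin L × Fin L → Measure ℝ := fun p => μ.map (s p.1 p.2) with hν
  have hprob : ∀ p, IsProbabilityMeasure (ν p) :=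
    fun p => Measure.isProbabilityMeasure_map (hmeas p.1 p.2).aemeasurable
  have hatom : ∀ p, NoAtoms (ν p) := fun p => hatomless p.1 p.2
  set P : MvPolynomial (Fin L × Fin L) ℝ :=
    (Matrix.of fun i j : Fin L =>
      ∏ k, (MvPolynomial.X (k, i) : MvPolynomial (Fin L × Fin L) ℝ) ^ α j k).det with hPdef
  have hP : P ≠ 0 := det_poly_ne_zero L α hα
  set F : Ω → (Fin L × Fin L → ℝ) := fun ω p => s p.1 p.2 ω with hF
  have hFm : Measurable F := measurable_pi_lambda _ (fun p => hmeas p.1 p.2)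
  set Z : Set (Fin L × Fin L → ℝ) := {x | MvPolynomial.eval x P = 0} with hZdef
  have hZm : MeasurableSet Z := (measurable_mvpoly_eval'' P) (measurableSet_singleton 0)
  have hmapF : Measure.pi ν = μ.map F := by
    refine Measure.pi_eq fun t ht => ?_
    rw [Measure.map_apply hFm (MeasurableSet.univ_pi ht)]
    have hpre : F ⁻¹' (Set.univ.pi t) =
        ⋂ p ∈ (Finset.univ : Finset (Fin L × Fin L)), (s p.1 p.2) ⁻¹' t p := by
      ext ω
      simp [hF, Set.mem_univ_pi]
    rw [hpre, hindep.measure_inter_preimage_eq_mul Finset.univ (fun p _ => ht p)]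
    symm
    refine Finset.prod_congr rfl fun p _ => ?_
    rw [hν, Measure.map_apply (hmeas p.1 p.2) (ht p)]
  have hpi : Measure.pi ν Z = 0 := aux_fintype ν hprob hatom P hP
  have hdet : ∀ ω, (Matrix.of fun i j : Fin L => ∏ k, (s k i ω) ^ (α j k)).det
      = MvPolynomial.eval (F ω) P := by
    intro ω
    rw [hPdef, RingHom.map_det]
    congr 1
    ext i j
    simp [Matrix.map_apply, hF]
  rw [Filter.eventually_iff, mem_ae_iff]
  have hsub : {ω | ¬ (Matrix.of fun i j : Fin L => ∏ k, (s k i ω) ^ (α j k)).det ≠ 0}ᶜᶜ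
      = F ⁻¹' Z := by
    ext ω
    simp [hdet ω, hZdef]
  have : {ω | (Matrix.of fun i j : Fin L => ∏ k, (s k i ω) ^ (α j k)).det ≠ 0}ᶜ = F ⁻¹' Z := by
    ext ω
    simp [hdet ω, hZdef]
  rw [this, ← Measure.map_apply hFm hZm, ← hmapF, hpi]
end

section
/- Let p(x_1,…,x_m) be a nonzero multivariate polynomial over ℝ, and let X_1,…,X_m be independent real random variables each with an atomless (continuous) distribution. Then P(p(X_1,…,X_m) = 0) = 0. -/
open MeasureTheory ProbabilityTheory

/-- Zero set of a nonzero multivariate polynomial is null for a product of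
atomless finite measures. -/
theorem pi_polynomial_zero_null :
    ∀ (m : ℕ) (ν : Fin m → Measure ℝ), (∀ i, IsProbabilityMeasure (ν i)) →
      (∀ i, NoAtoms (ν i)) → ∀ p : MvPolynomial (Fin m) ℝ, p ≠ 0 →
      Measure.pi ν {x | MvPolynomial.eval x p = 0} = 0 := by
  intro m
  induction m with
  | zero =>
    intro ν hprob hatom p hp
    have : {x : Fin 0 → ℝ | MvPolynomial.eval x p = 0} = ∅ := by
      ext x
      simp only [Set.mem_setOf_eq, Set.mem_empty_iff_false, iff_false]
      intro h
      apply hp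
      rw [MvPolynomial.eq_C_of_isEmpty p] at h ⊢
      rw [MvPolynomial.eval_C] at h
      rw [h, map_zero]
    rw [this]
    simp
  | succ n ih =>
    intro ν hprob hatom p hp
    haveI : ∀ i, IsProbabilityMeasure (ν i) := hprob
    haveI : ∀ i, NoAtoms (ν i) := hatom
    -- view p as a polynomial in the first variable
    set q : Polynomial (MvPolynomial (Fin n) ℝ) := MvPolynomial.finSuccEquiv ℝ n p with hq
    have hq0 : q ≠ 0 := by
      simp only [hq, Ne, EmbeddingLike.map_eq_zero_iff]
      exact hp
    set νt : Fin n → Measure ℝ := fun j => ν ((0 : Fin (n+1)).succAbove j) with hνt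
    haveI : ∀ j, IsProbabilityMeasure (νt j) := fun j => hprob _
    haveI : ∀ j, NoAtoms (νt j) := fun j => hatom _
    have e := MeasureTheory.measurePreserving_piFinSuccAbove ν 0
    have hScont : Continuous fun x : Fin (n+1) → ℝ => MvPolynomial.eval x p :=
      MvPolynomial.continuous_eval p
    have hSmeas : MeasurableSet {x : Fin (n+1) → ℝ | MvPolynomial.eval x p = 0} :=
      (MvPolynomial.continuous_eval p).measurable (measurableSet_singleton 0)
    -- transfer to the product measure
    have key : Measure.pi ν {x | MvPolynomial.eval x p = 0}
        = ((ν 0).prod (Measure.pi νt))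
          {ay : ℝ × (Fin n → ℝ) | MvPolynomial.eval (Fin.cons ay.1 ay.2) p = 0} := by
      have hps := e.symm
      rw [← hps.map_eq]
      rw [Measure.map_apply (MeasurableEquiv.piFinSuccAbove (fun _ => ℝ) 0).symm.measurable hSmeas]
      congr 1
      ext ⟨a, y⟩
      simp only [Set.mem_preimage, Set.mem_setOf_eq, MeasurableEquiv.piFinSuccAbove_symm_apply]
      rw [show (Fin.insertNthEquiv (fun _ => ℝ) 0) (a, y) = Fin.insertNth 0 a y from rfl,
        Fin.insertNth_zero']
    rw [key]
    have hmeas2 : MeasurableSet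
        {ay : ℝ × (Fin n → ℝ) | MvPolynomial.eval (Fin.cons ay.1 ay.2) p = 0} := by
      have : Continuous fun ay : ℝ × (Fin n → ℝ) => MvPolynomial.eval (Fin.cons ay.1 ay.2) p := by
        apply hScont.comp
        apply continuous_pi
        intro i
        refine Fin.cases ?_ ?_ i
        · exact continuous_fst
        · intro j
          simpa using (by fun_prop : Continuous fun a : ℝ × (Fin n → ℝ) => a.2 j)
      exact this.measurable (measurableSet_singleton 0)
    rw [Measure.prod_apply_symm hmeas2]
    -- for a.e. y, the section polynomial is nonzero, so its zero set is finite
    have hlead : q.leadingCoeff ≠ 0 := Polynomial.leadingCoeff_ne_zero.mpr hq0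
    have hnull := ih νt (fun j => hprob _) (fun j => hatom _) q.leadingCoeff hlead
    refine le_antisymm ?_ zero_le
    calc ∫⁻ y, ν 0 ((fun a => (a, y)) ⁻¹' _) ∂Measure.pi νt
        ≤ ∫⁻ y, (Set.indicator {y | MvPolynomial.eval y q.leadingCoeff = 0}
            (fun _ => 1) y) ∂Measure.pi νt := by
          apply lintegral_mono
          intro y
          dsimp only
          by_cases hy : MvPolynomial.eval y q.leadingCoeff = 0
          · rw [Set.indicator_of_mem
              (show y ∈ {y | MvPolynomial.eval y q.leadingCoeff = 0} from hy)]
            calc ν 0 _ ≤ ν 0 Set.univ := measure_mono (Set.subset_univ _)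
              _ = 1 := measure_univ
          · rw [Set.indicator_of_notMem
              (show y ∉ {y | MvPolynomial.eval y q.leadingCoeff = 0} from hy)]
            have hqy : (q.map (MvPolynomial.eval y)) ≠ 0 := by
              intro h
              apply hy
              have h2 := Polynomial.coeff_map (MvPolynomial.eval y) q.natDegree (p := q)
              rw [h] at h2
              rw [← Polynomial.coeff_natDegree, ← h2, Polynomial.coeff_zero]
            have hfin : {a : ℝ | MvPolynomial.eval (Fin.cons a y) p = 0}.Finite := by
              have : {a : ℝ | MvPolynomial.eval (Fin.cons a y) p = 0}
                  ⊆ (q.map (MvPolynomial.eval y)).roots.toFinset := by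
                intro a ha
                simp only [Set.mem_setOf_eq] at ha
                rw [MvPolynomial.eval_eq_eval_mv_eval'] at ha
                rw [Finset.mem_coe, Multiset.mem_toFinset, Polynomial.mem_roots']
                exact ⟨hqy, ha⟩
              exact Set.Finite.subset (Finset.finite_toSet _) this
            have : ν 0 ((fun a => (a, y)) ⁻¹'
                {ay : ℝ × (Fin n → ℝ) | MvPolynomial.eval (Fin.cons ay.1 ay.2) p = 0}) = 0 := by
              have heq : ((fun a => (a, y)) ⁻¹'
                  {ay : ℝ × (Fin n → ℝ) | MvPolynomial.eval (Fin.cons ay.1 ay.2) p = 0})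
                  = {a : ℝ | MvPolynomial.eval (Fin.cons a y) p = 0} := rfl
              rw [heq]
              haveI : NullSingletonClass (ν 0) := hatom 0
              exact hfin.measure_zero _
            rw [this]
      _ = 0 := by
          rw [lintegral_indicator_const]
          · rw [hnull]; simp
          · exact ((MvPolynomial.continuous_eval q.leadingCoeff).measurable
              (measurableSet_singleton 0))

/-- A nonzero multivariate real polynomial evaluated at independent random
variables with atomless distributions vanishes with probability zero. -/
theorem polynomial_zero_set_null
    {Ω : Type*} [MeasurableSpace Ω] (μ : Measure Ω) [IsProbabilityMeasure μ]
    (m : ℕ) (p : MvPolynomial (Fin m) ℝ) (hp : p ≠ 0)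
    (X : Fin m → Ω → ℝ) (hmeas : ∀ i, Measurable (X i))
    (hindep : iIndepFun X μ)
    (hatomless : ∀ i, NoAtoms (μ.map (X i))) :
    μ {ω | MvPolynomial.eval (fun i => X i ω) p = 0} = 0 := by
  set g : Ω → (Fin m → ℝ) := fun ω i => X i ω with hg
  have hgmeas : Measurable g := measurable_pi_lambda g hmeas
  have hmap : μ.map g = Measure.pi (fun i => μ.map (X i)) := by
    refine (Measure.pi_eq fun s hs => ?_).symm
    rw [Measure.map_apply hgmeas (MeasurableSet.univ_pi hs)]
    have hpre : g ⁻¹' Set.univ.pi s = ⋂ i, X i ⁻¹' s i := by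
      ext ω; simp [hg, Set.mem_pi]
    rw [hpre]
    have := (iIndepFun_iff_measure_inter_preimage_eq_mul.mp hindep) Finset.univ
      (sets := fun i => s i) (fun i _ => hs i)
    calc μ (⋂ i, X i ⁻¹' s i) = ∏ i, μ (X i ⁻¹' s i) := by
          rw [← this]; congr 1; simp
      _ = ∏ i, (μ.map (X i)) (s i) := by
          refine Finset.prod_congr rfl fun i _ => ?_
          rw [Measure.map_apply (hmeas i) (hs i)]
  have hSmeas : MeasurableSet {x : Fin m → ℝ | MvPolynomial.eval x p = 0} :=
    (MvPolynomial.continuous_eval p).measurable (measurableSet_singleton 0)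
  have : {ω | MvPolynomial.eval (fun i => X i ω) p = 0}
      = g ⁻¹' {x | MvPolynomial.eval x p = 0} := rfl
  rw [this, ← Measure.map_apply hgmeas hSmeas, hmap]
  haveI : ∀ i, IsProbabilityMeasure (μ.map (X i)) :=
    fun i => Measure.isProbabilityMeasure_map (hmeas i).aemeasurable
  exact pi_polynomial_zero_null m (fun i => μ.map (X i))
    (fun i => inferInstance) hatomless p hp
end

section
/- Let s(1),…,s(T) be i.i.d. real random variables with atomless distribution, and let α_1 < α_2 < … < α_T be distinct natural numbers. Then the T×T generalized Vandermonde matrix with entries M(i,j) = s(i)^{α_j} is invertible almost surely. -/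
open MeasureTheory ProbabilityTheory

open MvPolynomial in
lemma vandermonde_mv_det_ne_zero {T : ℕ} (α : Fin T → ℕ) (hα : Function.Injective α) :
    (Matrix.of fun i j : Fin T => (X i : MvPolynomial (Fin T) ℝ) ^ α j).det ≠ 0 := by
  classical
  set d₀ : Fin T →₀ ℕ := Finsupp.equivFunOnFinite.symm α with hd₀
  have hsum : ∀ (σ : Equiv.Perm (Fin T)) (j : Fin T),
      (∑ i, Finsupp.single (σ i) (α i)) j = α (σ.symm j) := by
    intro σ j
    rw [Finsupp.finset_sum_apply]
    have : ∀ i : Fin T, (Finsupp.single (σ i) (α i)) j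
        = if i = σ.symm j then α i else 0 := by
      intro i
      rw [Finsupp.single_apply]
      congr 1
      simp [Equiv.eq_symm_apply, eq_comm]
    rw [Finset.sum_congr rfl fun i _ => this i, Finset.sum_ite_eq' Finset.univ (σ.symm j) α]
    simp
  have hiff : ∀ σ : Equiv.Perm (Fin T),
      (∑ i, Finsupp.single (σ i) (α i)) = d₀ ↔ σ = 1 := by
    intro σ
    constructor
    · intro h
      apply Equiv.ext
      intro j
      have h2 := DFunLike.congr_fun h (σ j)
      rw [hsum] at h2
      simp only [hd₀, Finsupp.coe_equivFunOnFinite_symm,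
        Equiv.symm_apply_apply] at h2
      simpa using (hα h2).symm
    · rintro rfl
      ext j
      rw [hsum]
      simp [hd₀]
      rfl
  have key : coeff d₀ (Matrix.of fun i j : Fin T => (X i : MvPolynomial (Fin T) ℝ) ^ α j).det
      = 1 := by
    rw [Matrix.det_apply]
    have hmon : ∀ σ : Equiv.Perm (Fin T),
        (∏ i, (Matrix.of fun i j : Fin T => (X i : MvPolynomial (Fin T) ℝ) ^ α j) (σ i) i)
          = monomial (∑ i, Finsupp.single (σ i) (α i)) 1 := by
      intro σ
      rw [monomial_sum_one]
      simp [X_pow_eq_monomial]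
    rw [MvPolynomial.coeff_sum]
    rw [Finset.sum_congr rfl fun σ _ => by
      rw [MvPolynomial.coeff_smul, hmon σ, MvPolynomial.coeff_monomial]]
    rw [Finset.sum_eq_single_of_mem (1 : Equiv.Perm (Fin T)) (Finset.mem_univ _)]
    · rw [if_pos ((hiff 1).mpr rfl)]; simp
    · intro σ _ hσ
      rw [if_neg (fun h => hσ ((hiff σ).mp h))]
      simp
  intro h
  rw [h] at key
  simp at key

lemma measure_pi_poly_zero_set (n : ℕ) :
    ∀ (p : MvPolynomial (Fin n) ℝ), p ≠ 0 →
    ∀ (ν : Fin n → Measure ℝ), (∀ i, IsProbabilityMeasure (ν i)) → (∀ i, NoAtoms (ν i)) →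
    Measure.pi ν {x | MvPolynomial.eval x p = 0} = 0 := by
  induction n with
  | zero =>
    intro p hp ν _ _
    obtain ⟨c, rfl⟩ := MvPolynomial.C_surjective (Fin 0) p
    have hc : c ≠ 0 := fun h => hp (by rw [h, map_zero])
    convert measure_empty
    · ext x; simp [hc]
    · infer_instance
  | succ n ih =>
    intro p hp ν hprob hatom
    haveI := hprob
    haveI := hatom
    set q := MvPolynomial.finSuccEquiv ℝ n p with hqdef
    have hq0 : q ≠ 0 := by
      intro h
      apply hp
      have := (MvPolynomial.finSuccEquiv ℝ n).injective (h.trans (map_zero _).symm)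
      simpa using this
    have hck : q.coeff q.natDegree ≠ 0 := Polynomial.leadingCoeff_ne_zero.mpr hq0
    set ν' : Fin n → Measure ℝ := fun j => ν ((0 : Fin (n+1)).succAbove j) with hν'
    haveI : ∀ j, IsProbabilityMeasure (ν' j) := fun j => hprob _
    haveI : ∀ j, NoAtoms (ν' j) := fun j => hatom _
    have hmp := measurePreserving_piFinSuccAbove ν 0
    set t : Set (ℝ × (Fin n → ℝ)) :=
      {yz | MvPolynomial.eval (Fin.cons yz.1 yz.2) p = 0} with htdef
    have hconsmeas : Measurable fun yz : ℝ × (Fin n → ℝ) => (Fin.cons yz.1 yz.2 : Fin (n+1) → ℝ) := by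
      apply measurable_pi_iff.2
      intro j
      induction j using Fin.cases with
      | zero => simpa using measurable_fst
      | succ j => simp only [Fin.cons_succ]; exact (measurable_pi_apply j).comp measurable_snd
    have ht : MeasurableSet t :=
      measurableSet_eq_fun ((MvPolynomial.continuous_eval (p := p)).measurable.comp hconsmeas)
        measurable_const
    have hpre : (MeasurableEquiv.piFinSuccAbove (fun _ : Fin (n+1) => ℝ) 0) ⁻¹' t
        = {x : Fin (n+1) → ℝ | MvPolynomial.eval x p = 0} := by
      ext x
      have hx : (MeasurableEquiv.piFinSuccAbove (fun _ : Fin (n+1) => ℝ) 0) x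
          = (x 0, fun j => x ((0 : Fin (n+1)).succAbove j)) := rfl
      rw [Set.mem_preimage, hx]
      have hcons : (Fin.cons (x 0) (fun j => x ((0 : Fin (n+1)).succAbove j))
          : Fin (n+1) → ℝ) = x := by
        ext j
        induction j using Fin.cases with
        | zero => simp
        | succ j => simp [Fin.zero_succAbove]
      simp only [htdef, Set.mem_setOf_eq, hcons]
    rw [← hpre, hmp.measure_preimage ht.nullMeasurableSet]
    -- now compute ((ν 0).prod (Measure.pi ν')) t via swap
    have hswap : ((ν 0).prod (Measure.pi ν')) t
        = ((Measure.pi ν').prod (ν 0)) (Prod.swap ⁻¹' t) := by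
      rw [← Measure.prod_swap, Measure.map_apply measurable_swap ht]
    rw [hswap]
    rw [Measure.measure_prod_null (measurable_swap ht)]
    -- a.e. z: the slice has measure zero
    have hae : ∀ᵐ z ∂(Measure.pi ν'), MvPolynomial.eval z (q.coeff q.natDegree) ≠ 0 := by
      have := ih (q.coeff q.natDegree) hck ν' (fun j => hprob _) (fun j => hatom _)
      rw [ae_iff]
      simpa using this
    filter_upwards [hae] with z hz
    have hqz : (q.map (MvPolynomial.eval z)) ≠ 0 := by
      intro h
      apply hz
      rw [← Polynomial.coeff_map, h, Polynomial.coeff_zero]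
    have hfin : Set.Finite {y : ℝ | Polynomial.eval y (q.map (MvPolynomial.eval z)) = 0} :=
      Polynomial.finite_setOf_isRoot hqz
    have hslice : (Prod.mk z ⁻¹' (Prod.swap ⁻¹' t))
        = {y : ℝ | Polynomial.eval y (q.map (MvPolynomial.eval z)) = 0} := by
      ext y
      simp only [Set.mem_preimage, Prod.swap_prod_mk, htdef, Set.mem_setOf_eq]
      rw [MvPolynomial.eval_eq_eval_mv_eval']
    simp only [Pi.zero_apply]
    rw [hslice]
    exact (haveI : NullSingletonClass (ν 0) := hatom 0; hfin.measure_zero _)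

/-- Generalized Vandermonde: if s(1),…,s(T) are i.i.d. real random variables
with atomless law and α₁ < ⋯ < α_T are distinct naturals, then the matrix
M(i,j) = s(i)^{αⱼ} is invertible almost surely. -/
theorem generalized_vandermonde_invertible
    {Ω : Type*} [MeasurableSpace Ω] (μ : Measure Ω) [IsProbabilityMeasure μ]
    (T : ℕ) (s : Fin T → Ω → ℝ)
    (hmeas : ∀ i, Measurable (s i))
    (hindep : iIndepFun s μ)
    (hiid : ∀ i j, μ.map (s i) = μ.map (s j))
    (hatomless : ∀ i, NoAtoms (μ.map (s i)))
    (α : Fin T → ℕ) (hα : StrictMono α) :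
    ∀ᵐ ω ∂μ, IsUnit (Matrix.of fun i j : Fin T => (s i ω) ^ (α j)) := by
  classical
  set ν : Fin T → Measure ℝ := fun i => μ.map (s i) with hν
  haveI : ∀ i, IsProbabilityMeasure (ν i) := fun i => Measure.isProbabilityMeasure_map (hmeas i).aemeasurable
  set F : Ω → (Fin T → ℝ) := fun ω i => s i ω with hF
  have hFmeas : Measurable F := measurable_pi_lambda _ fun i => hmeas i
  have hmap : Measure.pi ν = μ.map F := by
    refine Measure.pi_eq fun A hA => ?_
    rw [Measure.map_apply hFmeas (MeasurableSet.univ_pi hA)]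
    have hpre : F ⁻¹' Set.pi Set.univ A = ⋂ i, s i ⁻¹' A i := by
      ext ω; simp [Set.mem_pi, hF]
    rw [hpre, hindep.meas_iInter fun i => ⟨A i, hA i, rfl⟩]
    exact Finset.prod_congr rfl fun i _ =>
      (Measure.map_apply (hmeas i) (hA i)).symm
  set p : MvPolynomial (Fin T) ℝ :=
    (Matrix.of fun i j : Fin T => (MvPolynomial.X i : MvPolynomial (Fin T) ℝ) ^ α j).det with hp
  have hp0 : p ≠ 0 := vandermonde_mv_det_ne_zero α hα.injective
  have hzero : μ.map F {x | MvPolynomial.eval x p = 0} = 0 := by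
    rw [← hmap]
    exact measure_pi_poly_zero_set T p hp0 ν (fun i => inferInstance) (fun i => hatomless i)
  have hSmeas : MeasurableSet {x : Fin T → ℝ | MvPolynomial.eval x p = 0} :=
    measurableSet_eq_fun (MvPolynomial.continuous_eval (p := p)).measurable measurable_const
  have hae : ∀ᵐ x ∂(μ.map F), MvPolynomial.eval x p ≠ 0 := by
    rw [ae_iff]
    simpa using hzero
  have hae2 : ∀ᵐ ω ∂μ, MvPolynomial.eval (F ω) p ≠ 0 :=
    (ae_map_iff hFmeas.aemeasurable hSmeas.compl).mp hae
  filter_upwards [hae2] with ω hω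
  have hdet : (Matrix.of fun i j : Fin T => (s i ω) ^ (α j)).det
      = MvPolynomial.eval (F ω) p := by
    rw [hp, RingHom.map_det]
    congr 1
    ext i j
    simp [Matrix.map, hF]
  rw [Matrix.isUnit_iff_isUnit_det, isUnit_iff_ne_zero, hdet]
  exact hω
end

section
/- Let p be a polynomial over ℝ in the variables x_1,…,x_m written as p = ∑_j c_j(y) · x^{β_j}, where the monomials x^{β_j} are distinct and the coefficients c_j(y) are polynomials in other variables y. If, for random (X, Y) with all coordinates independent and atomless, p(X, Y) = 0 with positive probability, then every c_j(Y) = 0 with positive probability. -/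
open MeasureTheory ProbabilityTheory

private lemma aux_measurable_eval {ι : Type*} (q : MvPolynomial ι ℝ) :
    Measurable fun x : ι → ℝ => MvPolynomial.eval x q := by
  induction q using MvPolynomial.induction_on with
  | C a => simpa using measurable_const
  | add p q hp hq => simpa only [map_add, Pi.add_def] using hp.add hq
  | mul_X p i hp =>
      simpa only [map_mul, MvPolynomial.eval_X, Pi.mul_def] using hp.mul (measurable_pi_apply i)

private lemma aux_pi_null : ∀ (n : ℕ) (ν : Fin n → Measure ℝ),
    (∀ i, IsProbabilityMeasure (ν i)) → (∀ i, NoAtoms (ν i)) →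
    ∀ q : MvPolynomial (Fin n) ℝ, q ≠ 0 →
    Measure.pi ν {x | MvPolynomial.eval x q = 0} = 0 := by
  intro n
  induction n with
  | zero =>
    intro ν _ _ q hq
    obtain ⟨a, rfl⟩ := MvPolynomial.C_surjective (Fin 0) q
    have ha : a ≠ 0 := by simpa using hq
    have h : {x : Fin 0 → ℝ | MvPolynomial.eval x (MvPolynomial.C a) = 0} = ∅ := by
      ext x; simp [ha]
    rw [h]
    simp
  | succ n IH =>
    intro ν hprob hatom q hq
    haveI := hprob; haveI := hatom
    set ν' : Fin n → Measure ℝ := fun j => ν ((0 : Fin (n + 1)).succAbove j) with hν'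
    haveI : ∀ j, IsProbabilityMeasure (ν' j) := fun j => hprob _
    haveI : ∀ j, NoAtoms (ν' j) := fun j => hatom _
    set π' : Measure (Fin n → ℝ) := Measure.pi ν' with hπ'
    set S : Set (Fin (n + 1) → ℝ) := {x | MvPolynomial.eval x q = 0} with hSdef
    have hS : MeasurableSet S := aux_measurable_eval q (measurableSet_singleton 0)
    have MP := measurePreserving_piFinSuccAbove ν 0
    set e := MeasurableEquiv.piFinSuccAbove (fun _ : Fin (n + 1) => ℝ) 0 with he
    set U : Set ((Fin n → ℝ) × ℝ) :=
      {p | MvPolynomial.eval (Fin.cons p.2 p.1) q = 0} with hUdef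
    have hconsm : Measurable fun p : (Fin n → ℝ) × ℝ => (Fin.cons p.2 p.1 : Fin (n+1) → ℝ) := by
      refine measurable_pi_lambda _ (fun i => ?_)
      refine Fin.cases ?_ (fun j => ?_) i
      · simpa using measurable_snd
      · simpa [Function.comp_def] using (measurable_pi_apply j).comp measurable_fst
    have hU : MeasurableSet U :=
      ((aux_measurable_eval q).comp hconsm) (measurableSet_singleton 0)
    -- transport the measure
    have h1 : Measure.pi ν S = ((ν 0).prod π') (⇑e.symm ⁻¹' S) := by
      rw [← MP.measure_preimage ((e.symm.measurable hS).nullMeasurableSet)]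
      congr 1
      ext x
      simp
    have h2 : ⇑e.symm ⁻¹' S = Prod.swap ⁻¹' U := by
      ext ⟨y, x'⟩
      simp only [Set.mem_preimage, hSdef, Set.mem_setOf_eq, hUdef, he,
        MeasurableEquiv.piFinSuccAbove_symm_apply, Fin.insertNth_zero', Prod.snd_swap,
        Prod.fst_swap, Fin.insertNthEquiv_zero, Fin.consEquiv_apply]
      exact Iff.rfl
    have h3 : ((ν 0).prod π') (Prod.swap ⁻¹' U) = (π'.prod (ν 0)) U := by
      exact (Measure.measurePreserving_swap).measure_preimage hU.nullMeasurableSet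
    rw [h1, h2, h3]
    -- now slice
    have hq' : MvPolynomial.finSuccEquiv ℝ n q ≠ 0 := by
      intro h
      apply hq
      have := congrArg (MvPolynomial.finSuccEquiv ℝ n).symm h
      simpa using this
    set lc := (MvPolynomial.finSuccEquiv ℝ n q).leadingCoeff with hlcdef
    have hlc : lc ≠ 0 := Polynomial.leadingCoeff_ne_zero.mpr hq'
    have hBad : π' {x' | MvPolynomial.eval x' lc = 0} = 0 :=
      IH ν' (fun j => hprob _) (fun j => hatom _) lc hlc
    rw [Measure.measure_prod_null hU]
    filter_upwards [measure_eq_zero_iff_ae_notMem.mp hBad] with x' hx'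
    have hx'' : MvPolynomial.eval x' lc ≠ 0 := hx'
    have hp0 : (MvPolynomial.finSuccEquiv ℝ n q).map (MvPolynomial.eval x') ≠ 0 := by
      intro h
      apply hx''
      have hcoe : Polynomial.coeff ((MvPolynomial.finSuccEquiv ℝ n q).map
          (MvPolynomial.eval x')) ((MvPolynomial.finSuccEquiv ℝ n q).natDegree) = 0 := by
        rw [h]; simp
      rw [Polynomial.coeff_map] at hcoe
      rw [hlcdef, Polynomial.leadingCoeff]
      exact hcoe
    have hfin : Set.Finite {y : ℝ | ((MvPolynomial.finSuccEquiv ℝ n q).map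
        (MvPolynomial.eval x')).IsRoot y} := Polynomial.finite_setOf_isRoot hp0
    have hslice : Prod.mk x' ⁻¹' U = {y : ℝ | ((MvPolynomial.finSuccEquiv ℝ n q).map
        (MvPolynomial.eval x')).IsRoot y} := by
      ext y
      simp only [Set.mem_preimage, hUdef, Set.mem_setOf_eq, Polynomial.IsRoot,
        MvPolynomial.eval_eq_eval_mv_eval']
    show (ν 0) (Prod.mk x' ⁻¹' U) = 0
    rw [hslice]
    haveI : NullSingletonClass (ν 0) := hatom 0
    exact hfin.measure_zero _

private lemma aux_pi_null' {ι : Type*} [Fintype ι] (ν : ι → Measure ℝ)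
    (hprob : ∀ i, IsProbabilityMeasure (ν i)) (hatom : ∀ i, NoAtoms (ν i))
    (q : MvPolynomial ι ℝ) (hq : q ≠ 0) :
    Measure.pi ν {x | MvPolynomial.eval x q = 0} = 0 := by
  haveI := hprob; haveI := hatom
  set e : Fin (Fintype.card ι) ≃ ι := (Fintype.equivFin ι).symm with he
  have MP := MeasureTheory.measurePreserving_piCongrLeft (μ := ν) e
  have hS : MeasurableSet {x : ι → ℝ | MvPolynomial.eval x q = 0} :=
    aux_measurable_eval q (measurableSet_singleton 0)
  rw [← MP.measure_preimage hS.nullMeasurableSet]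
  have happ : ∀ (x : Fin (Fintype.card ι) → ℝ) (i : ι),
      (MeasurableEquiv.piCongrLeft (fun _ : ι => ℝ) e) x i = x (e.symm i) := by
    intro x i
    conv_lhs => rw [← e.apply_symm_apply i]
    exact MeasurableEquiv.piCongrLeft_apply_apply (β := fun _ : ι => ℝ) e x (e.symm i)
  have hpre : ⇑(MeasurableEquiv.piCongrLeft (fun _ : ι => ℝ) e) ⁻¹'
      {x : ι → ℝ | MvPolynomial.eval x q = 0}
      = {x | MvPolynomial.eval x (MvPolynomial.rename e.symm q) = 0} := by
    ext x
    have hx : ⇑(MeasurableEquiv.piCongrLeft (fun _ : ι => ℝ) e) x = fun i => x (e.symm i) :=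
      funext (happ x)
    simp [hx, MvPolynomial.eval_rename, Function.comp_def]
  rw [hpre]
  refine aux_pi_null _ _ (fun i => hprob _) (fun i => hatom _) _ ?_
  intro h
  apply hq
  have := MvPolynomial.rename_injective (R := ℝ) _ e.symm.injective (σ := ι)
  exact this (by simpa using h)

private lemma aux_map_eq_pi {Ω ι : Type*} [MeasurableSpace Ω] [Fintype ι]
    (μ : Measure Ω) [IsProbabilityMeasure μ]
    (f : ι → Ω → ℝ) (hf : ∀ i, Measurable (f i))
    (hindep : iIndepFun f μ) :
    μ.map (fun ω i => f i ω) = Measure.pi (fun i => μ.map (f i)) := by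
  haveI : ∀ i, IsProbabilityMeasure (μ.map (f i)) :=
    fun i => Measure.isProbabilityMeasure_map (hf i).aemeasurable
  have hg : Measurable fun ω (i : ι) => f i ω := measurable_pi_lambda _ hf
  refine (Measure.pi_eq fun s hs => ?_).symm
  rw [Measure.map_apply hg (MeasurableSet.univ_pi hs)]
  have hpre : (fun ω (i : ι) => f i ω) ⁻¹' Set.pi Set.univ s
      = ⋂ i ∈ Finset.univ, f i ⁻¹' s i := by
    ext ω; simp [Set.mem_pi]
  rw [hpre, hindep.measure_inter_preimage_eq_mul Finset.univ (fun i _ => hs i)]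
  exact Finset.prod_congr rfl fun i _ => (Measure.map_apply (hf i) (hs i)).symm

/-- Inductive step of the cofactor-expansion argument: write
p = ∑ⱼ cⱼ(y)·x^{βⱼ} with pairwise distinct monomials x^{βⱼ}. If p(X,Y) = 0
with positive probability (all coordinates of (X,Y) independent with
atomless laws), then every coefficient cⱼ(Y) vanishes with positive
probability. -/
theorem coefficients_vanish_of_polynomial_vanishes
    {Ω : Type*} [MeasurableSpace Ω] (μ : Measure Ω) [IsProbabilityMeasure μ]
    (m l N : ℕ)
    (β : Fin N → (Fin m → ℕ)) (hβ : Function.Injective β)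
    (c : Fin N → MvPolynomial (Fin l) ℝ)
    (X : Fin m → Ω → ℝ) (Y : Fin l → Ω → ℝ)
    (hmeasX : ∀ i, Measurable (X i)) (hmeasY : ∀ i, Measurable (Y i))
    (hindep : iIndepFun (Sum.elim X Y) μ)
    (hatomX : ∀ i, NoAtoms (μ.map (X i)))
    (hatomY : ∀ i, NoAtoms (μ.map (Y i)))
    (hpos : 0 < μ {ω | ∑ j, MvPolynomial.eval (fun i => Y i ω) (c j) *
      ∏ i, (X i ω) ^ (β j i) = 0}) :
    ∀ j, 0 < μ {ω | MvPolynomial.eval (fun i => Y i ω) (c j) = 0} := by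
  classical
  intro j
  by_cases hcj : c j = 0
  · have h : {ω | MvPolynomial.eval (fun i => Y i ω) (c j) = 0} = Set.univ := by
      ext ω; simp [hcj]
    rw [h, measure_univ]
    exact zero_lt_one
  · exfalso
    -- find a point where c j is nonzero
    have hy : ∃ y₀ : Fin l → ℝ, MvPolynomial.eval y₀ (c j) ≠ 0 := by
      by_contra h
      push_neg at h
      exact hcj (MvPolynomial.funext fun x => by simpa using h x)
    obtain ⟨y₀, hy₀⟩ := hy
    set P : MvPolynomial (Fin m ⊕ Fin l) ℝ :=
      ∑ i, MvPolynomial.rename Sum.inr (c i) *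
        ∏ i', MvPolynomial.X (Sum.inl i') ^ β i i' with hPdef
    -- helper: specialization of the y-variables
    have key : ∀ p : MvPolynomial (Fin l) ℝ,
        MvPolynomial.aeval (fun k => (MvPolynomial.C (y₀ k) : MvPolynomial (Fin m) ℝ)) p
          = MvPolynomial.C (MvPolynomial.eval y₀ p) := by
      intro p
      induction p using MvPolynomial.induction_on with
      | C a => simp [MvPolynomial.algebraMap_eq]
      | add p q hp hq => simp only [map_add, hp, hq]
      | mul_X p i hp =>
          simp only [map_mul, MvPolynomial.aeval_X, MvPolynomial.eval_X, hp]
    have hφP : MvPolynomial.aeval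
        (Sum.elim MvPolynomial.X (fun k => (MvPolynomial.C (y₀ k) : MvPolynomial (Fin m) ℝ))) P
        = ∑ i, MvPolynomial.C (MvPolynomial.eval y₀ (c i)) *
            ∏ i', MvPolynomial.X i' ^ β i i' := by
      rw [hPdef, map_sum]
      refine Finset.sum_congr rfl fun i _ => ?_
      rw [map_mul, map_prod]
      congr 1
      · rw [MvPolynomial.aeval_rename]
        exact key (c i)
      · refine Finset.prod_congr rfl fun i' _ => ?_
        rw [map_pow, MvPolynomial.aeval_X]
        simp
    set D : Fin N → (Fin m →₀ ℕ) := fun i => Finsupp.equivFunOnFinite.symm (β i) with hD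
    have hprodmono : ∀ i, (∏ i', (MvPolynomial.X i' : MvPolynomial (Fin m) ℝ) ^ β i i')
        = MvPolynomial.monomial (D i) 1 := by
      intro i
      rw [← MvPolynomial.prod_X_pow_eq_monomial]
      refine (Finset.prod_subset (Finset.subset_univ _) (fun x _ hx => ?_)).symm
      have hx0 : β i x = 0 := by
        have h' : (D i) x = 0 := Finsupp.notMem_support_iff.mp hx
        simpa [hD, Finsupp.coe_equivFunOnFinite_symm] using h'
      rw [hx0, pow_zero]
    have hDinj : Function.Injective D := fun a b hab =>
      hβ (Finsupp.equivFunOnFinite.symm.injective hab)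
    have hcoeff : MvPolynomial.coeff (D j)
        (∑ i, MvPolynomial.C (MvPolynomial.eval y₀ (c i)) *
          ∏ i', MvPolynomial.X i' ^ β i i') = MvPolynomial.eval y₀ (c j) := by
      rw [MvPolynomial.coeff_sum]
      rw [Finset.sum_eq_single j]
      · rw [hprodmono j, MvPolynomial.C_mul_monomial, mul_one,
          MvPolynomial.coeff_monomial, if_pos rfl]
      · intro b _ hb
        rw [hprodmono b, MvPolynomial.C_mul_monomial, mul_one,
          MvPolynomial.coeff_monomial, if_neg (fun hDb => hb (hDinj hDb))]
      · simp
    have hP : P ≠ 0 := by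
      intro h0
      rw [h0, map_zero] at hφP
      apply hy₀
      have h1 := congrArg (MvPolynomial.coeff (D j)) hφP
      rw [hcoeff] at h1
      simpa using h1.symm
    -- measure-theoretic part
    have hmeas_elim : ∀ i : Fin m ⊕ Fin l, Measurable (Sum.elim X Y i) := by
      intro i
      cases i with
      | inl a => exact hmeasX a
      | inr a => exact hmeasY a
    set g : Ω → (Fin m ⊕ Fin l → ℝ) := fun ω i => Sum.elim X Y i ω with hg
    have hgm : Measurable g := measurable_pi_lambda _ hmeas_elim
    have hSmeas : MeasurableSet {f : Fin m ⊕ Fin l → ℝ | MvPolynomial.eval f P = 0} :=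
      aux_measurable_eval P (measurableSet_singleton 0)
    have hev : {ω | ∑ j, MvPolynomial.eval (fun i => Y i ω) (c j) *
        ∏ i, (X i ω) ^ (β j i) = 0} = g ⁻¹' {f | MvPolynomial.eval f P = 0} := by
      ext ω
      simp only [Set.mem_setOf_eq, Set.mem_preimage, hPdef, map_sum, map_mul,
        MvPolynomial.eval_prod, map_pow, MvPolynomial.eval_X, MvPolynomial.eval_rename]
      exact Iff.rfl
    rw [hev, ← Measure.map_apply hgm hSmeas] at hpos
    have hmap := aux_map_eq_pi μ (Sum.elim X Y) hmeas_elim hindep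
    rw [hmap] at hpos
    have hprob' : ∀ i, IsProbabilityMeasure (μ.map (Sum.elim X Y i)) :=
      fun i => Measure.isProbabilityMeasure_map (hmeas_elim i).aemeasurable
    have hatom' : ∀ i, NoAtoms (μ.map (Sum.elim X Y i)) := by
      intro i
      cases i with
      | inl a => exact hatomX a
      | inr a => exact hatomY a
    have h0 := aux_pi_null' _ hprob' hatom' P hP
    rw [h0] at hpos
    exact lt_irrefl 0 hpos
end
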